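/- Every equivalence class of ∼ on φ-rows contains a unique minimal φ-row, namely the row whose maximal factorization A₀^{m₀}⋯A_n^{m_n} satisfies m_i ∈ [1, rank(A_i) + 1] for all i; and its length is at most (n+1)·(maxrank + 1) where n + 1 ≤ |REQ| + |AP| + 1 and maxrank ≤ |REQ|, hence at most (|REQ| + |AP| + 1)·(|REQ| + 1). -/

import Mathlib

structure Atom (α β : Type) where
  req : Finset α
  prop : Finset β
deriving DecidableEq

def rank {α β : Type} (REQ : Finset α) (A : Atom α β) : ℕ :=
  REQ.card - A.req.card

/-- A φ-row in maximal factorization form: positive multiplicities, atoms over (REQ, AP),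
adjacent block atoms distinct with requests increasing and propositions decreasing. -/
def PhiFact {α β : Type} (REQ : Finset α) (AP : Finset β) (l : List (Atom α β × ℕ)) : Prop :=
  (∀ b ∈ l, 0 < b.2 ∧ b.1.req ⊆ REQ ∧ b.1.prop ⊆ AP) ∧
  List.Chain' (fun b b' => b.1 ≠ b'.1 ∧ b.1.req ⊆ b'.1.req ∧ b'.1.prop ⊆ b.1.prop) l

def BlockEquiv {α β : Type} (REQ : Finset α) (b b' : Atom α β × ℕ) : Prop :=
  b.1 = b'.1 ∧ (b.2 = b'.2 ∨ (rank REQ b.1 < b.2 ∧ rank REQ b.1 < b'.2))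

def RowEquiv {α β : Type} (REQ : Finset α) (r r' : List (Atom α β × ℕ)) : Prop :=
  List.Forall₂ (BlockEquiv REQ) r r'

lemma length_le_of_strict {γ : Type} (f : γ → ℕ) (N : ℕ) (l : List γ)
    (hc : l.Pairwise (fun a b => f a < f b)) (hb : ∀ b ∈ l, f b ≤ N) :
    l.length ≤ N + 1 := by
  have hnd : (l.map f).Nodup := by
    rw [List.nodup_iff_sublist]
    intro a h
    have := (List.pairwise_map.mpr (hc.imp (fun h => Nat.ne_of_lt h))).sublist h
    simp at this
  have hsub : (l.map f).toFinset ⊆ Finset.range (N + 1) := by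
    intro x hx
    simp only [List.mem_toFinset, List.mem_map] at hx
    obtain ⟨b, hb', rfl⟩ := hx
    simpa [Nat.lt_succ_iff] using hb b hb'
  have := Finset.card_le_card hsub
  rwa [List.toFinset_card_of_nodup hnd, Finset.card_range, List.length_map] at this

lemma chain'_mono_of_mem {γ : Type} {P Q : γ → γ → Prop} :
    ∀ {l : List γ}, (∀ a ∈ l, ∀ b ∈ l, P a b → Q a b) → List.Chain' P l → List.Chain' Q l
  | [], _, _ => List.isChain_nil
  | [_], _, _ => List.isChain_singleton _
  | a :: b :: t, h, hc => by
    simp only [List.Chain', List.isChain_cons_cons] at hc ⊢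
    exact ⟨h a (by simp) b (by simp) hc.1,
      chain'_mono_of_mem (fun x hx y hy => h x (by simp [hx]) y (by simp [hy])) hc.2⟩

/-- Length bound for a φ-row. -/
lemma phiFact_length_le {α β : Type} (REQ : Finset α) (AP : Finset β)
    (l : List (Atom α β × ℕ)) (h : PhiFact REQ AP l) :
    l.length ≤ REQ.card + AP.card + 1 := by
  obtain ⟨hmem, hchain⟩ := h
  set f : Atom α β × ℕ → ℕ := fun b => b.1.req.card + (AP.card - b.1.prop.card) with hf
  -- strengthen chain to strict inequality on f, then pairwise
  have hchain' : List.Chain' (fun b b' => f b < f b') l := by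
    refine chain'_mono_of_mem ?_ hchain
    intro b hb b' hb' ⟨hne, hreq, hprop⟩
    have hprop_le : b.1.prop.card ≤ AP.card := Finset.card_le_card (hmem b hb).2.2
    have hprop_le' : b'.1.prop.card ≤ AP.card := Finset.card_le_card (hmem b' hb').2.2
    have hreqc : b.1.req.card ≤ b'.1.req.card := Finset.card_le_card hreq
    have hpropc : b'.1.prop.card ≤ b.1.prop.card := Finset.card_le_card hprop
    simp only [hf]
    rcases lt_or_eq_of_le hreqc with h1 | h1
    · omega
    · have hreq_eq : b.1.req = b'.1.req :=
        Finset.eq_of_subset_of_card_le hreq (le_of_eq h1.symm)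
      rcases lt_or_eq_of_le hpropc with h2 | h2
      · omega
      · exfalso
        apply hne
        have hprop_eq : b'.1.prop = b.1.prop :=
          Finset.eq_of_subset_of_card_le hprop h2.ge
        cases hb1 : b.1; cases hb2 : b'.1
        rw [hb1, hb2] at hreq_eq hprop_eq
        simp_all
  haveI : IsTrans (Atom α β × ℕ) (fun a b => f a < f b) :=
    ⟨fun _ _ _ h h' => h.trans h'⟩
  have hpw : l.Pairwise (fun a b => f a < f b) :=
    List.isChain_iff_pairwise.mp hchain'
  refine length_le_of_strict f (REQ.card + AP.card) l hpw ?_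
  intro b hb
  have h1 : b.1.req.card ≤ REQ.card := Finset.card_le_card (hmem b hb).2.1
  simp only [hf]
  have : AP.card - b.1.prop.card ≤ AP.card := Nat.sub_le _ _
  omega

lemma minimal_unique {α β : Type} (REQ : Finset α) :
    ∀ (r m m' : List (Atom α β × ℕ)),
      RowEquiv REQ r m → RowEquiv REQ r m' →
      (∀ b ∈ m, b.2 ≤ rank REQ b.1 + 1) → (∀ b ∈ m', b.2 ≤ rank REQ b.1 + 1) →
      m = m'
  | [], [], [], _, _, _, _ => rfl
  | a :: r, b :: m, b' :: m', h1, h2, hm, hm' => by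
    rw [RowEquiv] at h1 h2
    cases h1 with
    | cons hbe1 ht1 =>
      cases h2 with
      | cons hbe2 ht2 =>
        have htl : m = m' := minimal_unique REQ r m m' ht1 ht2
          (fun x hx => hm x (List.mem_cons_of_mem _ hx))
          (fun x hx => hm' x (List.mem_cons_of_mem _ hx))
        have h1b := hm b (List.mem_cons_self)
        have h2b := hm' b' (List.mem_cons_self)
        obtain ⟨hfst1, hsnd1⟩ := hbe1
        obtain ⟨hfst2, hsnd2⟩ := hbe2
        have hfst : b.1 = b'.1 := hfst1 ▸ hfst2
        have hsnd : b.2 = b'.2 := by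
          rw [← hfst1] at h1b; rw [← hfst2] at h2b
          rcases hsnd1 with h | ⟨ha1, hb1⟩ <;> rcases hsnd2 with h' | ⟨ha2, hb2⟩ <;> omega
        rw [htl, Prod.ext hfst hsnd]
  | [], _ :: _, _, h1, _, _, _ => by cases h1
  | [], _, _ :: _, _, h2, _, _ => by cases h2
  | _ :: _, [], _, h1, _, _, _ => by cases h1
  | _ :: _, _, [], _, h2, _, _ => by cases h2

/-- Every equivalence class contains a unique minimal φ-row (all multiplicities in
[1, rank + 1]), whose total length is at most (|REQ| + |AP| + 1)·(|REQ| + 1). -/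
theorem unique_minimal_row {α β : Type} (REQ : Finset α) (AP : Finset β)
    (r : List (Atom α β × ℕ)) (hr : PhiFact REQ AP r) :
    ∃! m : List (Atom α β × ℕ),
      PhiFact REQ AP m ∧ (∀ b ∈ m, b.2 ≤ rank REQ b.1 + 1) ∧ RowEquiv REQ r m ∧
      (m.map Prod.snd).sum ≤ (REQ.card + AP.card + 1) * (REQ.card + 1) := by
  classical
  set g : Atom α β × ℕ → Atom α β × ℕ := fun b => (b.1, min b.2 (rank REQ b.1 + 1)) with hg
  refine ⟨r.map g, ⟨?_, ?_, ?_, ?_⟩, ?_⟩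
  · -- PhiFact
    obtain ⟨hmem, hchain⟩ := hr
    constructor
    · intro b hb
      simp only [List.mem_map] at hb
      obtain ⟨a, ha, rfl⟩ := hb
      obtain ⟨hpos, h1, h2⟩ := hmem a ha
      exact ⟨by simp [g]; omega, h1, h2⟩
    · apply List.isChain_map_of_isChain g _ hchain
      intro a b hab
      exact hab
  · intro b hb
    simp only [List.mem_map] at hb
    obtain ⟨a, _, rfl⟩ := hb
    simp [g]
  · -- RowEquiv
    rw [RowEquiv, List.forall₂_map_right_iff]
    apply List.forall₂_same.mpr
    intro b hb
    refine ⟨rfl, ?_⟩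
    rcases le_or_gt b.2 (rank REQ b.1 + 1) with h | h
    · left; simp [g, Nat.min_eq_left h]
    · right
      constructor
      · omega
      · simp only [g]; omega
  · -- sum bound
    have hlen : (r.map g).length ≤ REQ.card + AP.card + 1 := by
      rw [List.length_map]
      exact phiFact_length_le REQ AP r hr
    have hle : ∀ x ∈ (r.map g).map Prod.snd, x ≤ REQ.card + 1 := by
      intro x hx
      simp only [List.map_map, List.mem_map] at hx
      obtain ⟨a, _, rfl⟩ := hx
      have : rank REQ a.1 ≤ REQ.card := Nat.sub_le _ _
      simp only [Function.comp, g]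
      omega
    calc ((r.map g).map Prod.snd).sum
        ≤ ((r.map g).map Prod.snd).length * (REQ.card + 1) :=
          List.sum_le_card_nsmul _ _ hle
      _ ≤ (REQ.card + AP.card + 1) * (REQ.card + 1) := by
          rw [List.length_map]
          exact Nat.mul_le_mul_right _ hlen
  · -- uniqueness
    rintro m' ⟨_, hmin', hequiv', _⟩
    have hequiv : RowEquiv REQ r (r.map g) := by
      rw [RowEquiv, List.forall₂_map_right_iff]
      apply List.forall₂_same.mpr
      intro b _
      refine ⟨rfl, ?_⟩
      rcases le_or_gt b.2 (rank REQ b.1 + 1) with h | h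
      · left; simp [g, Nat.min_eq_left h]
      · right; constructor
        · omega
        · simp only [g]; omega
    have hmin : ∀ b ∈ r.map g, b.2 ≤ rank REQ b.1 + 1 := by
      intro b hb
      simp only [List.mem_map] at hb
      obtain ⟨a, _, rfl⟩ := hb
      simp [g]
    exact minimal_unique REQ r m' (r.map g) hequiv' hequiv hmin' hmin
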